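/- arXiv:0811.3769 — 2 statements merged into one kernel-verified Lean document; each statement's English description precedes it below -/
import Mathlib

section
/- Let L be an α-stable Lévy process with scale C > 0 and skewness β ∈ [−1,1], where α ∈ (0,2), α ≠ 1, and let p > α. Then for every ε > 0 and every δ > 0 there exists θ_0 > 0 such that for every θ ∈ (0, θ_0): limsup_{n→∞} P( V_p^n(L)_θ ≥ ε ) ≤ δ. -/
open MeasureTheory ProbabilityTheory Filter Real

noncomputable section

variable {Ω : Type*} [MeasurableSpace Ω]

/-- The equidistant `p`-variation `V_p^n(X)_t = ∑_{i=1}^{⌊nt⌋} |X_{i/n} - X_{(i-1)/n}|^p`. -/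
def pVar (p : ℝ) (n : ℕ) (X : ℝ → Ω → ℝ) (t : ℝ) (ω : Ω) : ℝ :=
  ∑ i ∈ Finset.Icc 1 ⌊(n : ℝ) * t⌋₊,
    |X ((i : ℝ) / (n : ℝ)) ω - X (((i : ℝ) - 1) / (n : ℝ)) ω| ^ p

/-- An `α`-stable Lévy process with scale `C` and skewness `β`: `L_0 = 0` a.s.,
independent and stationary increments, and the prescribed characteristic function. -/
structure IsStableLevy (P : Measure Ω) (α C β : ℝ) (L : ℝ → Ω → ℝ) : Prop where
  measurable : ∀ t : ℝ, Measurable (L t)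
  zero : ∀ᵐ ω ∂P, L 0 ω = 0
  indepIncr : ∀ (m : ℕ) (t : Fin (m + 1) → ℝ), (∀ i, 0 ≤ t i) → StrictMono t →
    iIndepFun
      (fun i : Fin m => fun ω => L (t i.succ) ω - L (t i.castSucc) ω) P
  statIncr : ∀ s t : ℝ, 0 ≤ s → 0 ≤ t →
    Measure.map (fun ω => L (t + s) ω - L s ω) P = Measure.map (L t) P
  charFun : ∀ t : ℝ, 0 ≤ t → ∀ l : ℝ,
    ∫ ω, Complex.exp (Complex.I * (l : ℂ) * (L t ω : ℂ)) ∂P =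
      Complex.exp (Complex.ofReal (-(t * C ^ α * |l| ^ α)) *
        (1 - Complex.I * Complex.ofReal (β * Real.sign l * Real.tan (π * α / 2))))

/-- The scale `C'` of the limiting process. -/
def Cprime (α C p : ℝ) : ℝ :=
  C ^ p * (Real.cos (π * α / (2 * p)) * Real.Gamma (1 - α / p) /
    (Real.cos (π * α / 2) * Real.Gamma (1 - α))) ^ (p / α)

/-- The characteristic function at time `t` of an `(α/p)`-stable totally right-skewed
Lévy process with scale `C'`. -/
def phi (α C p t l : ℝ) : ℂ :=
  Complex.exp (Complex.ofReal (-(t * Cprime α C p ^ (α / p) * |l| ^ (α / p))) *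
    (1 - Complex.I * Complex.ofReal (Real.sign l * Real.tan (π * α / (2 * p)))))

lemma one_sub_cos_le_abs (b : ℝ) : 1 - Real.cos b ≤ |b| := by
  rcases le_or_gt (|b|) 2 with h | h
  · have h1 := Real.one_sub_sq_div_two_le_cos (x := b)
    have h2 : b ^ 2 = |b| ^ 2 := (sq_abs b).symm
    nlinarith [abs_nonneg b]
  · nlinarith [Real.neg_one_le_cos b]

lemma key_ineq {a b : ℝ} (ha : 0 ≤ a) : 1 - Real.exp (-a) * Real.cos b ≤ a + |b| := by
  have h1 : 1 - a ≤ Real.exp (-a) := by linarith [Real.add_one_le_exp (-a)]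
  have h2 : Real.exp (-a) ≤ 1 := by
    rw [Real.exp_le_one_iff]; linarith
  have h3 : 1 - Real.cos b ≤ |b| := one_sub_cos_le_abs b
  have h4 : Real.cos b ≤ 1 := Real.cos_le_one b
  have h5 : 0 < Real.exp (-a) := Real.exp_pos _
  nlinarith


lemma inner_cos_int {u x : ℝ} (hx : x ≠ 0) :
    ∫ l in (-u)..u, Real.cos (l * x) = 2 * (Real.sin (u * x) / x) := by
  rw [intervalIntegral.integral_comp_mul_right Real.cos hx, integral_cos]
  rw [neg_mul, Real.sin_neg]
  rw [smul_eq_mul]; ring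

lemma inner_int_eq {u x : ℝ} (hx : x ≠ 0) :
    ∫ l in (-u)..u, (1 - Real.cos (l * x)) = 2 * u - 2 * (Real.sin (u * x) / x) := by
  have h1 : IntervalIntegrable (fun l => Real.cos (l * x)) volume (-u) u :=
    (Real.continuous_cos.comp (continuous_id.mul continuous_const)).intervalIntegrable _ _
  rw [intervalIntegral.integral_sub (intervalIntegrable_const) h1,
    intervalIntegral.integral_const, inner_cos_int hx]
  simp; ring

lemma sin_div_le {u x : ℝ} (hu : 0 < u) (hx : x ≠ 0) : Real.sin (u * x) / x ≤ u := by
  have h5 : 0 < |x| := abs_pos.2 hx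
  calc Real.sin (u * x) / x ≤ |Real.sin (u * x)| / |x| := (le_abs_self _).trans_eq (abs_div _ _)
    _ ≤ u * |x| / |x| := by
        gcongr
        calc |Real.sin (u * x)| ≤ |u * x| := Real.abs_sin_le_abs
          _ = u * |x| := by rw [abs_mul, abs_of_pos hu]
    _ = u := by field_simp

lemma inner_int_nonneg {u : ℝ} (hu : 0 < u) (x : ℝ) :
    0 ≤ ∫ l in (-u)..u, (1 - Real.cos (l * x)) := by
  rcases eq_or_ne x 0 with rfl | hx
  · simp
  · rw [inner_int_eq hx]
    have := sin_div_le hu hx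
    linarith

lemma inner_int_ge {u : ℝ} (hu : 0 < u) {x : ℝ} (hx : 2 / u ≤ |x|) :
    u ≤ ∫ l in (-u)..u, (1 - Real.cos (l * x)) := by
  have hx0 : x ≠ 0 := by
    intro h; rw [h] at hx; simp at hx
    have : 0 < 2 / u := by positivity
    linarith
  rw [inner_int_eq hx0]
  have h5 : 0 < |x| := abs_pos.2 hx0
  have h1 : Real.sin (u * x) / x ≤ 1 / |x| := by
    calc Real.sin (u * x) / x ≤ |Real.sin (u * x)| / |x| := (le_abs_self _).trans_eq (abs_div _ _)
      _ ≤ 1 / |x| := by gcongr; exact Real.abs_sin_le_one _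
  have h2 : 1 / |x| ≤ u / 2 := by
    rw [div_le_div_iff₀ h5 (by norm_num : (0:ℝ) < 2)]
    rw [div_le_iff₀ hu] at hx
    nlinarith
  linarith

lemma re_charFun (P : Measure Ω) [IsProbabilityMeasure P] (α C β : ℝ)
    (L : ℝ → Ω → ℝ) (hL : IsStableLevy P α C β L) (s : ℝ) (hs : 0 ≤ s) (l : ℝ) :
    ∫ ω, Real.cos (l * L s ω) ∂P =
      Real.exp (-(s * C ^ α * |l| ^ α)) *
        Real.cos ((s * C ^ α * |l| ^ α) * (β * Real.sign l * Real.tan (π * α / 2))) := by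
  have hint : Integrable (fun ω => Complex.exp (Complex.I * (l : ℂ) * (L s ω : ℂ))) P := by
    apply Integrable.mono' (integrable_const (1 : ℝ))
    · apply Measurable.aestronglyMeasurable
      exact Complex.measurable_exp.comp
        ((measurable_const.mul (Complex.measurable_ofReal.comp (hL.measurable s))))
    · filter_upwards with ω
      have : Complex.I * (l : ℂ) * (L s ω : ℂ) = ((l * L s ω : ℝ) : ℂ) * Complex.I := by
        push_cast; ring
      rw [this, Complex.norm_exp_ofReal_mul_I]
  have hre := integral_re hint
  have hc := hL.charFun s hs l
  have hlhs : ∀ ω, RCLike.re (Complex.exp (Complex.I * (l : ℂ) * (L s ω : ℂ)))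
      = Real.cos (l * L s ω) := by
    intro ω
    have : Complex.I * (l : ℂ) * (L s ω : ℂ) = ((l * L s ω : ℝ) : ℂ) * Complex.I := by
      push_cast; ring
    rw [this]
    simp only [RCLike.re_to_complex]
    exact Complex.exp_ofReal_mul_I_re _
  calc ∫ ω, Real.cos (l * L s ω) ∂P
      = ∫ ω, RCLike.re (Complex.exp (Complex.I * (l : ℂ) * (L s ω : ℂ))) ∂P := by
        congr 1; ext ω; rw [hlhs]
    _ = RCLike.re (∫ ω, Complex.exp (Complex.I * (l : ℂ) * (L s ω : ℂ)) ∂P) := hre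
    _ = _ := by
        rw [hc]
        simp only [RCLike.re_to_complex]
        rw [Complex.exp_re]
        set a := s * C ^ α * |l| ^ α with ha
        set b := β * Real.sign l * Real.tan (π * α / 2) with hb
        have hz1 : ((↑(-a) : ℂ) * (1 - Complex.I * ↑b)).re = -a := by simp [Complex.mul_re]
        have hz2 : ((↑(-a) : ℂ) * (1 - Complex.I * ↑b)).im = a * b := by simp [Complex.mul_im]
        rw [hz1, hz2]

lemma abs_sign_le_one (l : ℝ) : |Real.sign l| ≤ 1 := by
  rcases Real.sign_apply_eq l with h | h | h <;> rw [h] <;> norm_num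

lemma tail_bound (P : Measure Ω) [IsProbabilityMeasure P] (α C β : ℝ)
    (hα : 0 < α) (hC : 0 < C) (hβ : β ∈ Set.Icc (-1:ℝ) 1)
    (L : ℝ → Ω → ℝ) (hL : IsStableLevy P α C β L)
    {s : ℝ} (hs : 0 ≤ s) {x : ℝ} (hx : 0 < x) :
    (P {ω | x ≤ |L s ω|}).toReal ≤
      2 ^ (α + 1) * C ^ α * (1 + |Real.tan (π * α / 2)|) * s * x ^ (-α) := by
  set u : ℝ := 2 / x with hu_def
  have hu : 0 < u := by positivity
  set T : ℝ := |Real.tan (π * α / 2)| with hT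
  have hT0 : 0 ≤ T := abs_nonneg _
  set M : ℝ := s * C ^ α * u ^ α * (1 + T) with hM
  have hCα : 0 < C ^ α := Real.rpow_pos_of_pos hC α
  have huα : 0 < u ^ α := Real.rpow_pos_of_pos hu α
  -- pointwise bound on 1 - Re φ
  have hpt : ∀ l : ℝ, |l| ≤ u → 1 - ∫ ω, Real.cos (l * L s ω) ∂P ≤ M := by
    intro l hl
    rw [re_charFun P α C β L hL s hs l]
    set a : ℝ := s * C ^ α * |l| ^ α with ha_def
    have ha : 0 ≤ a := by positivity
    set b : ℝ := β * Real.sign l * Real.tan (π * α / 2) with hb_def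
    have h1 := key_ineq (a := a) (b := a * b) ha
    have hb : |b| ≤ T := by
      rw [hb_def, hT, abs_mul, abs_mul]
      have h2 : |β| ≤ 1 := abs_le.2 ⟨hβ.1, hβ.2⟩
      have h3 := abs_sign_le_one l
      have h23 : |β| * |Real.sign l| ≤ 1 := by nlinarith [abs_nonneg β, abs_nonneg (Real.sign l)]
      nlinarith [mul_le_mul_of_nonneg_right h23 (abs_nonneg (Real.tan (π * α / 2)))]
    have h4 : |a * b| ≤ a * T := by
      rw [abs_mul, abs_of_nonneg ha]; exact mul_le_mul_of_nonneg_left hb ha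
    have h5 : a ≤ s * C ^ α * u ^ α := by
      have : |l| ^ α ≤ u ^ α := Real.rpow_le_rpow (abs_nonneg l) hl hα.le
      rw [ha_def]
      nlinarith [Real.rpow_nonneg (abs_nonneg l) α, mul_nonneg hs hCα.le]
    rw [hM]
    nlinarith
  -- integrability of cos for each l, and 1 - ∫ cos identity
  have hcosint : ∀ l : ℝ, Integrable (fun ω => Real.cos (l * L s ω)) P := by
    intro l
    apply Integrable.mono' (integrable_const (1:ℝ))
    · exact ((measurable_const.mul (hL.measurable s)).cos).aestronglyMeasurable
    · filter_upwards with ω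
      rw [Real.norm_eq_abs]
      exact Real.abs_cos_le_one _
  have hone : ∀ l : ℝ, ∫ ω, (1 - Real.cos (l * L s ω)) ∂P
      = 1 - ∫ ω, Real.cos (l * L s ω) ∂P := by
    intro l
    rw [integral_sub (integrable_const 1) (hcosint l)]
    simp
  -- Fubini
  have hFint : Integrable (Function.uncurry fun l ω => 1 - Real.cos (l * L s ω))
      ((volume.restrict (Set.Ioc (-u) u)).prod P) := by
    apply Integrable.mono' (integrable_const (2:ℝ))
    · apply Measurable.aestronglyMeasurable
      apply Measurable.const_sub
      exact (measurable_fst.mul ((hL.measurable s).comp measurable_snd)).cos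
    · filter_upwards with q
      rw [Real.norm_eq_abs, abs_le]
      constructor
      · have := Real.cos_le_one (q.1 * L s q.2); simp [Function.uncurry]; linarith
      · have := Real.neg_one_le_cos (q.1 * L s q.2); simp [Function.uncurry]; linarith
  have hswap := MeasureTheory.integral_integral_swap hFint
  -- LHS of swap is ≤ 2uM
  have hlhs : ∫ l in Set.Ioc (-u) u, (∫ ω, (1 - Real.cos (l * L s ω)) ∂P) ≤ 2 * u * M := by
    have hmono : ∫ l in Set.Ioc (-u) u, (∫ ω, (1 - Real.cos (l * L s ω)) ∂P)
        ≤ ∫ _ in Set.Ioc (-u) u, M := by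
      apply setIntegral_mono_on
      · exact hFint.integral_prod_left
      · exact integrableOn_const (by rw [Real.volume_Ioc]; exact ENNReal.ofReal_ne_top)
      · exact measurableSet_Ioc
      · intro l hl
        rw [hone l]
        apply hpt
        rw [abs_le]
        exact ⟨hl.1.le, hl.2⟩
    have hconst : ∫ _ in Set.Ioc (-u) u, M = 2 * u * M := by
      rw [setIntegral_const, Real.volume_real_Ioc, max_eq_left (by linarith), smul_eq_mul]
      ring
    linarith [hmono, hconst.le]
  -- RHS of swap is ≥ u * P
  set S : Set Ω := {ω | x ≤ |L s ω|} with hS_def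
  have hSmeas : MeasurableSet S := by
    exact measurableSet_le measurable_const (hL.measurable s).abs
  have hxu : 2 / u = x := by rw [hu_def]; field_simp
  have hrhs : u * (P S).toReal ≤ ∫ ω, (∫ l in Set.Ioc (-u) u, (1 - Real.cos (l * L s ω))) ∂P := by
    have hind : ∫ ω, S.indicator (fun _ => u) ω ∂P = (P S).toReal • u :=
      integral_indicator_const u hSmeas
    rw [show u * (P S).toReal = (P S).toReal • u by rw [smul_eq_mul]; ring, ← hind]
    apply integral_mono
    · exact (integrable_const u).indicator hSmeas
    · exact hFint.integral_prod_right
    · intro ω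
      dsimp only
      have hIoc : ∫ l in Set.Ioc (-u) u, (1 - Real.cos (l * L s ω))
          = ∫ l in (-u)..u, (1 - Real.cos (l * L s ω)) :=
        (intervalIntegral.integral_of_le (by linarith)).symm
      by_cases hω : ω ∈ S
      · rw [Set.indicator_of_mem hω, hIoc]
        exact inner_int_ge hu (by rw [hxu]; exact hω)
      · rw [Set.indicator_of_notMem hω, hIoc]
        exact inner_int_nonneg hu (L s ω)
  have hfinal : u * (P S).toReal ≤ 2 * u * M := by
    calc u * (P S).toReal ≤ _ := hrhs
      _ = _ := hswap.symm
      _ ≤ 2 * u * M := hlhs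
  have hP : (P S).toReal ≤ 2 * M := by
    have := (mul_le_mul_iff_right₀ hu).1 (by linarith : u * (P S).toReal ≤ u * (2 * M))
    linarith
  -- rewrite 2*M in the desired form
  have hux : u ^ α = 2 ^ α * x ^ (-α) := by
    rw [hu_def, Real.div_rpow (by norm_num) hx.le, Real.rpow_neg hx.le]
    rw [div_eq_mul_inv]
  have h2α : (2:ℝ) ^ (α + 1) = 2 ^ α * 2 := by
    rw [Real.rpow_add (by norm_num : (0:ℝ) < 2), Real.rpow_one]
  calc (P S).toReal ≤ 2 * M := hP
    _ = 2 ^ (α + 1) * C ^ α * (1 + T) * s * x ^ (-α) := by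
        rw [hM, hux, h2α]; ring

lemma trunc_moment (P : Measure Ω) [IsProbabilityMeasure P] (α C β p : ℝ)
    (hα : 0 < α) (hC : 0 < C) (hβ : β ∈ Set.Icc (-1:ℝ) 1) (hp : α < p)
    (L : ℝ → Ω → ℝ) (hL : IsStableLevy P α C β L)
    {s : ℝ} (hs : 0 ≤ s) {ε : ℝ} (hε : 0 < ε) :
    ∫⁻ ω, ENNReal.ofReal (min (|L s ω| ^ p) ε) ∂P ≤
      ENNReal.ofReal ((2 ^ (α+1) * C ^ α * (1 + |Real.tan (π * α / 2)|)) * s *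
        (p / (p - α)) * ε ^ (1 - α / p)) := by
  have hp0 : 0 < p := hα.trans hp
  set K : ℝ := 2 ^ (α+1) * C ^ α * (1 + |Real.tan (π * α / 2)|) with hK_def
  have hK : 0 ≤ K := by
    have := Real.rpow_pos_of_pos (by norm_num : (0:ℝ) < 2) (α+1)
    have := Real.rpow_pos_of_pos hC α
    have := abs_nonneg (Real.tan (π * α / 2))
    positivity
  have hmf : Measurable fun ω => min (|L s ω| ^ p) ε :=
    ((Real.continuous_rpow_const hp0.le).measurable.comp (hL.measurable s).abs).min
      measurable_const
  rw [lintegral_eq_lintegral_meas_lt P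
    (Filter.Eventually.of_forall fun ω => le_min (Real.rpow_nonneg (abs_nonneg _) p) hε.le)
    hmf.aemeasurable]
  set r : ℝ := -(α / p) with hr_def
  have hr1 : (0:ℝ) < r + 1 := by
    rw [hr_def]
    have : α / p < 1 := (div_lt_one hp0).2 hp
    linarith
  have hbound : ∀ t ∈ Set.Ioi (0:ℝ), P {a | t < min (|L s a| ^ p) ε} ≤
      (Set.Ioc (0:ℝ) ε).indicator (fun t => ENNReal.ofReal (K * s * t ^ r)) t := by
    intro t ht
    rcases le_or_gt ε t with h | h
    · have : {a | t < min (|L s a| ^ p) ε} = ∅ := by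
        ext a; simp only [Set.mem_setOf_eq, Set.mem_empty_iff_false, iff_false, not_lt]
        exact le_trans (min_le_right _ _) h
      rw [this]; simp
    · rw [Set.indicator_of_mem (Set.mem_Ioc.2 ⟨ht, h.le⟩)]
      have ht0 : (0:ℝ) < t := ht
      have hx : (0:ℝ) < t ^ (1/p) := Real.rpow_pos_of_pos ht0 _
      have hsub : {a | t < min (|L s a| ^ p) ε} ⊆ {ω | t ^ (1/p) ≤ |L s ω|} := by
        intro a ha
        have h1 : t < |L s a| ^ p := lt_of_lt_of_le ha (min_le_left _ _)
        have h2 : t ^ (1/p) < (|L s a| ^ p) ^ (1/p) :=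
          Real.rpow_lt_rpow ht0.le h1 (by positivity)
        have h3 : (|L s a| ^ p) ^ (1/p) = |L s a| := by
          rw [← Real.rpow_mul (abs_nonneg _), mul_one_div_cancel (ne_of_gt hp0),
            Real.rpow_one]
        exact le_of_lt (h3 ▸ h2)
      refine le_trans (measure_mono hsub) ?_
      have htail := tail_bound P α C β hα hC hβ L hL hs hx
      have hconv : (t ^ (1/p)) ^ (-α) = t ^ r := by
        rw [← Real.rpow_mul ht0.le, hr_def]
        congr 1
        field_simp
      rw [ENNReal.le_ofReal_iff_toReal_le (measure_ne_top P _) (by positivity)]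
      calc (P {ω | t ^ (1/p) ≤ |L s ω|}).toReal
          ≤ K * s * (t ^ (1/p)) ^ (-α) := by rw [hK_def]; exact htail
        _ = K * s * t ^ r := by rw [hconv]
  calc ∫⁻ t in Set.Ioi 0, P {a | t < min (|L s a| ^ p) ε}
      ≤ ∫⁻ t in Set.Ioi 0, (Set.Ioc (0:ℝ) ε).indicator
          (fun t => ENNReal.ofReal (K * s * t ^ r)) t :=
        setLIntegral_mono' measurableSet_Ioi hbound
    _ = ∫⁻ t in Set.Ioc (0:ℝ) ε, ENNReal.ofReal (K * s * t ^ r) := by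
        rw [lintegral_indicator measurableSet_Ioc, Measure.restrict_restrict measurableSet_Ioc,
          Set.inter_eq_left.2 Set.Ioc_subset_Ioi_self]
    _ = ENNReal.ofReal (∫ t in Set.Ioc (0:ℝ) ε, K * s * t ^ r) := by
        rw [← ofReal_integral_eq_lintegral_ofReal]
        · have hII : IntervalIntegrable (fun t : ℝ => t ^ r) volume 0 ε :=
            intervalIntegral.intervalIntegrable_rpow' (by linarith : (-1:ℝ) < r)
          have hIO : IntegrableOn (fun t : ℝ => t ^ r) (Set.Ioc 0 ε) := by
            rw [← Set.uIoc_of_le hε.le]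
            exact intervalIntegrable_iff.1 hII
          exact hIO.const_mul (K * s)
        · filter_upwards [ae_restrict_mem measurableSet_Ioc] with t ht
          have : (0:ℝ) < t := ht.1
          positivity
    _ ≤ ENNReal.ofReal (K * s * (p / (p - α)) * ε ^ (1 - α / p)) := by
        apply ENNReal.ofReal_le_ofReal
        rw [MeasureTheory.integral_const_mul, ← intervalIntegral.integral_of_le hε.le,
          integral_rpow (Or.inl (by linarith : (-1:ℝ) < r))]
        rw [Real.zero_rpow (ne_of_gt hr1)]
        have hre : r + 1 = 1 - α / p := by rw [hr_def]; ring
        rw [hre]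
        have hpα : (0:ℝ) < p - α := by linarith
        have h1 : (1 : ℝ) - α/p ≠ 0 := by rw [← hre]; exact ne_of_gt hr1
        have heq : (ε ^ (1 - α/p) - 0) / (1 - α/p) = (p / (p - α)) * ε ^ (1 - α/p) := by
          rw [sub_zero, div_eq_iff h1]
          field_simp
          try ring
        rw [heq]
        exact le_of_eq (by ring)

lemma sum_min_ge {ι : Type*} (S : Finset ι) (a : ι → ℝ) (ha : ∀ i ∈ S, 0 ≤ a i)
    {ε : ℝ} (hε : 0 ≤ ε) (h : ε ≤ ∑ i ∈ S, a i) : ε ≤ ∑ i ∈ S, min (a i) ε := by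
  by_cases hex : ∃ i ∈ S, ε ≤ a i
  · obtain ⟨i, hi, hεi⟩ := hex
    calc ε = min (a i) ε := (min_eq_right hεi).symm
      _ ≤ ∑ i ∈ S, min (a i) ε :=
        Finset.single_le_sum (fun j hj => le_min (ha j hj) hε) hi
  · push_neg at hex
    have heq : ∀ i ∈ S, min (a i) ε = a i := fun i hi => min_eq_left (hex i hi).le
    rw [Finset.sum_congr rfl heq]
    exact h


theorem tightness_estimate_sup (P : Measure Ω) [IsProbabilityMeasure P]
    (α C β p : ℝ) (hα : α ∈ Set.Ioo (0 : ℝ) 2) (hα1 : α ≠ 1) (hC : 0 < C)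
    (hβ : β ∈ Set.Icc (-1 : ℝ) 1) (L : ℝ → Ω → ℝ)
    (hL : IsStableLevy P α C β L) (hp : α < p) :
    ∀ ε δ : ℝ, 0 < ε → 0 < δ → ∃ θ₀ : ℝ, 0 < θ₀ ∧ ∀ θ ∈ Set.Ioo (0 : ℝ) θ₀,
      Filter.limsup (fun n : ℕ => P {ω | ε ≤ pVar p n L θ ω}) atTop
        ≤ ENNReal.ofReal δ := by
  intro ε δ hε hδ
  obtain ⟨hα0, hα2⟩ := hα
  have hp0 : 0 < p := hα0.trans hp
  have hpα : (0:ℝ) < p - α := by linarith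
  set K : ℝ := 2 ^ (α+1) * C ^ α * (1 + |Real.tan (π * α / 2)|) with hK_def
  have hK : 0 < K := by
    have h1 : (0:ℝ) < 2 ^ (α+1) := Real.rpow_pos_of_pos (by norm_num) _
    have h2 : (0:ℝ) < C ^ α := Real.rpow_pos_of_pos hC _
    have h3 : (0:ℝ) ≤ |Real.tan (π * α / 2)| := abs_nonneg _
    positivity
  set Q : ℝ := K * (p / (p - α)) * ε ^ (1 - α / p) with hQ_def
  have hQ : 0 < Q := by
    have := Real.rpow_pos_of_pos hε (1 - α / p)
    positivity
  set B : ℝ := Q / ε with hB_def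
  have hB : 0 < B := by positivity
  refine ⟨δ / B, by positivity, ?_⟩
  rintro θ ⟨hθ0, hθ1⟩
  have hbound : ∀ n : ℕ, P {ω | ε ≤ pVar p n L θ ω} ≤ ENNReal.ofReal (θ * B) := by
    intro n
    rcases Nat.eq_zero_or_pos n with rfl | hn
    · have hempty : {ω | ε ≤ pVar p 0 L θ ω} = ∅ := by
        ext ω
        simp only [Set.mem_setOf_eq, Set.mem_empty_iff_false, iff_false, not_le, pVar]
        norm_num
        exact hε
      rw [hempty]
      simp
    · have hn0 : (0:ℝ) < n := by exact_mod_cast hn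
      set N := ⌊(n:ℝ) * θ⌋₊ with hN_def
      set F : ℝ → ENNReal := fun x => ENNReal.ofReal (min (|x| ^ p) ε) with hF_def
      have hFmeas : Measurable F :=
        ENNReal.measurable_ofReal.comp
          (((Real.continuous_rpow_const hp0.le).measurable.comp measurable_abs).min
            measurable_const)
      set g : Ω → ℝ := fun ω => ∑ i ∈ Finset.Icc 1 N,
        min (|L ((i:ℝ)/(n:ℝ)) ω - L (((i:ℝ)-1)/(n:ℝ)) ω| ^ p) ε with hg_def
      have hgmeas : Measurable fun ω => ENNReal.ofReal (g ω) := by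
        apply ENNReal.measurable_ofReal.comp
        apply Finset.measurable_sum
        intro i _
        exact ((Real.continuous_rpow_const hp0.le).measurable.comp
          ((hL.measurable _).sub (hL.measurable _)).abs).min measurable_const
      have hsub : {ω | ε ≤ pVar p n L θ ω} ⊆
          {ω | ENNReal.ofReal ε ≤ ENNReal.ofReal (g ω)} := by
        intro ω hω
        simp only [Set.mem_setOf_eq] at hω ⊢
        apply ENNReal.ofReal_le_ofReal
        exact sum_min_ge _ _ (fun i _ => Real.rpow_nonneg (abs_nonneg _) p) hε.le hω
      have hmarkov := meas_ge_le_lintegral_div (μ := P) hgmeas.aemeasurable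
        (ENNReal.ofReal_pos.mpr hε).ne'
        ENNReal.ofReal_ne_top
      have hsum : ∫⁻ ω, ENNReal.ofReal (g ω) ∂P =
          ∑ i ∈ Finset.Icc 1 N, ∫⁻ ω,
            F (L ((i:ℝ)/(n:ℝ)) ω - L (((i:ℝ)-1)/(n:ℝ)) ω) ∂P := by
        rw [← lintegral_finset_sum]
        · congr 1
          ext ω
          rw [hg_def, hF_def]
          exact ENNReal.ofReal_sum_of_nonneg
            (fun i _ => le_min (Real.rpow_nonneg (abs_nonneg _) p) hε.le)
        · intro i _
          exact hFmeas.comp ((hL.measurable _).sub (hL.measurable _))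
      have hterm : ∀ i ∈ Finset.Icc 1 N,
          ∫⁻ ω, F (L ((i:ℝ)/(n:ℝ)) ω - L (((i:ℝ)-1)/(n:ℝ)) ω) ∂P ≤
            ENNReal.ofReal (K * (1/(n:ℝ)) * (p / (p - α)) * ε ^ (1 - α / p)) := by
        intro i hi
        have hi1 : 1 ≤ i := (Finset.mem_Icc.1 hi).1
        have hi1' : (1:ℝ) ≤ (i:ℝ) := by exact_mod_cast hi1
        have hs' : (0:ℝ) ≤ ((i:ℝ)-1)/(n:ℝ) := by
          apply div_nonneg (by linarith) hn0.le
        have ht' : (0:ℝ) ≤ 1/(n:ℝ) := by positivity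
        have hmap := hL.statIncr (((i:ℝ)-1)/(n:ℝ)) (1/(n:ℝ)) hs' ht'
        have hsum' : (1:ℝ)/(n:ℝ) + ((i:ℝ)-1)/(n:ℝ) = (i:ℝ)/(n:ℝ) := by
          rw [← add_div]
          ring_nf
        rw [hsum'] at hmap
        have hG : Measurable fun ω => L ((i:ℝ)/(n:ℝ)) ω - L (((i:ℝ)-1)/(n:ℝ)) ω :=
          (hL.measurable _).sub (hL.measurable _)
        calc ∫⁻ ω, F (L ((i:ℝ)/(n:ℝ)) ω - L (((i:ℝ)-1)/(n:ℝ)) ω) ∂P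
            = ∫⁻ x, F x ∂(Measure.map (fun ω => L ((i:ℝ)/(n:ℝ)) ω - L (((i:ℝ)-1)/(n:ℝ)) ω) P) :=
              (lintegral_map hFmeas hG).symm
          _ = ∫⁻ x, F x ∂(Measure.map (L (1/(n:ℝ))) P) := by rw [hmap]
          _ = ∫⁻ ω, F (L (1/(n:ℝ)) ω) ∂P := lintegral_map hFmeas (hL.measurable _)
          _ ≤ _ := by
              simp only [hF_def, hK_def]
              exact trunc_moment P α C β p hα0 hC hβ hp L hL ht' hε
      have hNle : (N:ℝ) ≤ (n:ℝ) * θ := Nat.floor_le (by positivity)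
      calc P {ω | ε ≤ pVar p n L θ ω}
          ≤ P {ω | ENNReal.ofReal ε ≤ ENNReal.ofReal (g ω)} := measure_mono hsub
        _ ≤ (∫⁻ ω, ENNReal.ofReal (g ω) ∂P) / ENNReal.ofReal ε := hmarkov
        _ ≤ (ENNReal.ofReal (θ * Q)) / ENNReal.ofReal ε := by
            apply ENNReal.div_le_div_right
            rw [hsum]
            calc ∑ i ∈ Finset.Icc 1 N, ∫⁻ ω,
                  F (L ((i:ℝ)/(n:ℝ)) ω - L (((i:ℝ)-1)/(n:ℝ)) ω) ∂P
                ≤ ∑ _i ∈ Finset.Icc 1 N,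
                  ENNReal.ofReal (K * (1/(n:ℝ)) * (p / (p - α)) * ε ^ (1 - α / p)) :=
                  Finset.sum_le_sum hterm
              _ = (N : ENNReal) * ENNReal.ofReal (K * (1/(n:ℝ)) * (p / (p - α)) * ε ^ (1 - α / p)) := by
                  rw [Finset.sum_const, Nat.card_Icc]
                  simp [nsmul_eq_mul]
              _ = ENNReal.ofReal ((N:ℝ) * (K * (1/(n:ℝ)) * (p / (p - α)) * ε ^ (1 - α / p))) := by
                  rw [ENNReal.ofReal_mul (by positivity : (0:ℝ) ≤ (N:ℝ))]
                  congr 1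
                  exact (ENNReal.ofReal_natCast N).symm
              _ ≤ ENNReal.ofReal (θ * Q) := by
                  apply ENNReal.ofReal_le_ofReal
                  rw [hQ_def]
                  have hε1 : (0:ℝ) < ε ^ (1 - α / p) := Real.rpow_pos_of_pos hε _
                  have key : (N:ℝ) * (1/(n:ℝ)) ≤ θ := by
                    calc (N:ℝ) * (1/(n:ℝ)) ≤ ((n:ℝ) * θ) * (1/(n:ℝ)) :=
                        mul_le_mul_of_nonneg_right hNle (by positivity)
                      _ = θ := by field_simp
                  calc (N:ℝ) * (K * (1/(n:ℝ)) * (p / (p - α)) * ε ^ (1 - α / p))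
                      = ((N:ℝ) * (1/(n:ℝ))) * (K * (p / (p - α)) * ε ^ (1 - α / p)) := by ring
                    _ ≤ θ * (K * (p / (p - α)) * ε ^ (1 - α / p)) := by
                        apply mul_le_mul_of_nonneg_right key
                        positivity
        _ = ENNReal.ofReal (θ * B) := by
            rw [← ENNReal.ofReal_div_of_pos hε]
            congr 1
            rw [hB_def]
            ring
  calc Filter.limsup (fun n : ℕ => P {ω | ε ≤ pVar p n L θ ω}) atTop
      ≤ ENNReal.ofReal (θ * B) := by
        apply Filter.limsup_le_of_le
        · isBoundedDefault
        · exact Filter.Eventually.of_forall hbound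
    _ ≤ ENNReal.ofReal δ := by
        apply ENNReal.ofReal_le_ofReal
        have : θ * B < δ := (lt_div_iff₀ hB).1 hθ1
        linarith
end
end

section
/- Let L be an α-stable Lévy process with scale C > 0 and skewness β ∈ [−1,1], where α ∈ (0,2), α ≠ 1, let p > α, and let Y : [0,∞) → Ω → ℝ be any stochastic process such that V_p^n(Y)_t → 0 in probability as n → ∞ for every t > 0. Then for every N > 0, sup_{0 ≤ t ≤ N} |V_p^n(L+Y)_t − V_p^n(L)_t| → 0 in probability as n → ∞. -/
open MeasureTheory ProbabilityTheory Filter Real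

noncomputable section

variable {Ω : Type*} [MeasurableSpace Ω]

open scoped ENNReal

/-- Elementary inequality: for `p, ε > 0` there is `K` such that
`||x+y|^p - |x|^p| ≤ ε |x|^p + K |y|^p`. -/
lemma abs_rpow_perturb (p : ℝ) (hp : 0 < p) (ε : ℝ) (hε : 0 < ε) :
    ∃ K : ℝ, 0 < K ∧ ∀ x y : ℝ, abs (|x + y| ^ p - |x| ^ p) ≤ ε * |x| ^ p + K * |y| ^ p := by
  -- choose δ ∈ (0,1) with (1+δ)^p ≤ 1+ε and 1-ε ≤ (1-δ)^p
  obtain ⟨δ, hδ0, hδ1, h1, h2⟩ :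
      ∃ δ : ℝ, 0 < δ ∧ δ < 1 ∧ (1 + δ) ^ p ≤ 1 + ε ∧ 1 - ε ≤ (1 - δ) ^ p := by
    have c1 : ContinuousAt (fun d : ℝ => (1 + d) ^ p) 0 := by
      have hadd : ContinuousAt (fun d : ℝ => 1 + d) 0 :=
        (continuous_const.add continuous_id).continuousAt
      exact (Real.continuousAt_rpow_const ((1:ℝ) + 0) p (Or.inl (by norm_num))).comp hadd
    have c2 : ContinuousAt (fun d : ℝ => (1 - d) ^ p) 0 := by
      have hsub : ContinuousAt (fun d : ℝ => 1 - d) 0 :=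
        (continuous_const.sub continuous_id).continuousAt
      exact (Real.continuousAt_rpow_const ((1:ℝ) - 0) p (Or.inl (by norm_num))).comp hsub
    have h0 : ((1:ℝ) + 0) ^ p = 1 := by norm_num
    have h0' : ((1:ℝ) - 0) ^ p = 1 := by norm_num
    have hc1 := Metric.continuousAt_iff.mp c1 ε hε
    have hc2 := Metric.continuousAt_iff.mp c2 ε hε
    obtain ⟨d1, hd1, H1⟩ := hc1
    obtain ⟨d2, hd2, H2⟩ := hc2
    refine ⟨min (min d1 d2 / 2) (1/2), by positivity, by
      have := min_le_right (min d1 d2 / 2) (1/2:ℝ); linarith, ?_, ?_⟩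
    · have hlt : dist (min (min d1 d2 / 2) (1/2:ℝ)) 0 < d1 := by
        rw [Real.dist_eq, sub_zero, abs_of_pos (by positivity)]
        have h := min_le_left (min d1 d2 / 2) (1/2:ℝ)
        have : min d1 d2 ≤ d1 := min_le_left _ _
        linarith
      have := H1 hlt
      rw [Real.dist_eq, h0] at this
      have := abs_lt.mp this
      linarith [this.2]
    · have hlt : dist (min (min d1 d2 / 2) (1/2:ℝ)) 0 < d2 := by
        rw [Real.dist_eq, sub_zero, abs_of_pos (by positivity)]
        have h := min_le_left (min d1 d2 / 2) (1/2:ℝ)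
        have : min d1 d2 ≤ d2 := min_le_right _ _
        linarith
      have := H2 hlt
      rw [Real.dist_eq, h0'] at this
      have := abs_lt.mp this
      linarith [this.1]
  refine ⟨(1/δ + 1) ^ p + (1/δ) ^ p, by positivity, fun x y => ?_⟩
  rcases le_or_gt (δ * |x|) |y| with hcase | hcase
  · -- |y| ≥ δ|x| : bound both terms by multiples of |y|^p
    have hxy : |x| ≤ |y| / δ := by
      rw [le_div_iff₀ hδ0]; linarith [mul_comm δ (|x|)]
    have hb1 : |x + y| ^ p ≤ ((1/δ + 1) * |y|) ^ p := by
      apply Real.rpow_le_rpow (abs_nonneg _) _ hp.le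
      calc |x + y| ≤ |x| + |y| := abs_add_le _ _
        _ ≤ |y| / δ + |y| := by linarith
        _ = (1/δ + 1) * |y| := by ring
    have hb2 : |x| ^ p ≤ ((1/δ) * |y|) ^ p := by
      apply Real.rpow_le_rpow (abs_nonneg _) _ hp.le
      rw [one_div, inv_mul_eq_div]; exact hxy
    rw [Real.mul_rpow (by positivity) (abs_nonneg _)] at hb1
    rw [Real.mul_rpow (by positivity) (abs_nonneg _)] at hb2
    have habs : abs (|x + y| ^ p - |x| ^ p) ≤ |x + y| ^ p + |x| ^ p := by
      have := abs_sub (|x + y| ^ p) (|x| ^ p)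
      rw [abs_of_nonneg (Real.rpow_nonneg (abs_nonneg _) p),
        abs_of_nonneg (Real.rpow_nonneg (abs_nonneg _) p)] at this
      exact this
    have hεx : 0 ≤ ε * |x| ^ p := by positivity
    nlinarith [Real.rpow_nonneg (abs_nonneg y) p]
  · -- |y| < δ|x|
    have hx0 : 0 < |x| := by
      by_contra h
      push_neg at h
      have : |x| = 0 := le_antisymm h (abs_nonneg x)
      rw [this, mul_zero] at hcase
      exact absurd hcase (not_lt.mpr (abs_nonneg y))
    have hup : |x + y| ≤ (1 + δ) * |x| := by
      calc |x + y| ≤ |x| + |y| := abs_add_le _ _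
        _ ≤ |x| + δ * |x| := by linarith
        _ = (1 + δ) * |x| := by ring
    have hlo : (1 - δ) * |x| ≤ |x + y| := by
      have := abs_sub_abs_le_abs_sub (x) (-y)
      have h2 : |x| - |y| ≤ |x + y| := by
        have := abs_sub_abs_le_abs_sub x (-y)
        simpa [sub_neg_eq_add] using this
      nlinarith
    have hup' : |x + y| ^ p ≤ ((1 + δ) * |x|) ^ p :=
      Real.rpow_le_rpow (abs_nonneg _) hup hp.le
    have hδ1' : (0:ℝ) ≤ 1 - δ := by linarith
    have hlo' : ((1 - δ) * |x|) ^ p ≤ |x + y| ^ p :=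
      Real.rpow_le_rpow (mul_nonneg hδ1' (abs_nonneg _)) hlo hp.le
    rw [Real.mul_rpow (by positivity) (abs_nonneg _)] at hup'
    rw [Real.mul_rpow hδ1' (abs_nonneg _)] at hlo'
    have hxp : 0 ≤ |x| ^ p := Real.rpow_nonneg (abs_nonneg _) p
    have hyp : 0 ≤ |y| ^ p := Real.rpow_nonneg (abs_nonneg _) p
    have hK : 0 ≤ ((1/δ + 1) ^ p + (1/δ) ^ p) * |y| ^ p := by positivity
    rw [abs_le]
    constructor
    · have : (1 - ε) * |x| ^ p ≤ (1 - δ) ^ p * |x| ^ p :=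
        mul_le_mul_of_nonneg_right h2 hxp
      linarith
    · have : (1 + δ) ^ p * |x| ^ p ≤ (1 + ε) * |x| ^ p :=
        mul_le_mul_of_nonneg_right h1 hxp
      linarith

open intervalIntegral in
lemma integral_cos_mul_eq (u b : ℝ) (hb : b ≠ 0) :
    ∫ l in (0:ℝ)..u, Real.cos (l * b) = Real.sin (u * b) / b := by
  rw [integral_comp_mul_right Real.cos hb]
  simp [integral_cos, smul_eq_mul]
  ring

/-- Truncation inequality: a polynomial tail bound from a lower bound on `∫ cos (l • X)`. -/
lemma tail_of_cos (P : Measure Ω) [IsProbabilityMeasure P] (X : Ω → ℝ) (hX : Measurable X)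
    (α c : ℝ) (hα : 0 < α) (hc : 0 ≤ c)
    (hRe : ∀ l : ℝ, 1 - c * |l| ^ α ≤ ∫ ω, Real.cos (l * X ω) ∂P)
    (x : ℝ) (hx : 0 < x) :
    P {ω | x ≤ |X ω|} ≤ ENNReal.ofReal (2 ^ (α + 1) * c / ((α + 1) * x ^ α)) := by
  set u : ℝ := 2 / x with hu_def
  have hu : 0 < u := by positivity
  set ν : Measure ℝ := volume.restrict (Set.Ioc (0 : ℝ) u) with hν_def
  have hνfin : IsFiniteMeasure ν := by
    constructor
    rw [hν_def, Measure.restrict_apply_univ]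
    exact measure_Ioc_lt_top
  set F : Ω × ℝ → ℝ := fun q => 1 - Real.cos (q.2 * X q.1) with hF_def
  have hFmeas : Measurable F :=
    measurable_const.sub (Real.measurable_cos.comp (measurable_snd.mul (hX.comp measurable_fst)))
  have hFbound : ∀ q : Ω × ℝ, ‖F q‖ ≤ 2 := by
    intro q
    rw [Real.norm_eq_abs, hF_def, abs_le]
    constructor
    · simp only
      linarith [Real.cos_le_one (q.2 * X q.1)]
    · simp only
      linarith [Real.neg_one_le_cos (q.2 * X q.1)]
  have hFint : Integrable F (P.prod ν) := by
    refine (integrable_const (2 : ℝ)).mono' hFmeas.aestronglyMeasurable ?_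
    exact Eventually.of_forall hFbound
  set g : Ω → ℝ := fun ω => ∫ l, F (ω, l) ∂ν with hg_def
  have hg_int : Integrable g P := hFint.integral_prod_left
  have hg_nonneg : ∀ ω, 0 ≤ g ω := by
    intro ω
    rw [hg_def]
    refine integral_nonneg fun l => ?_
    simp only [hF_def, Pi.zero_apply]
    linarith [Real.cos_le_one (l * X ω)]
  -- Fubini and the upper bound
  have hswap : ∫ ω, g ω ∂P = ∫ l, (∫ ω, F (ω, l) ∂P) ∂ν := by
    exact integral_integral_swap (f := fun ω l => F (ω, l)) hFint
  have hcos_int : ∀ l : ℝ, Integrable (fun ω => Real.cos (l * X ω)) P := by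
    intro l
    refine (integrable_const (1 : ℝ)).mono'
      ((Real.measurable_cos.comp ((measurable_const (a := l)).mul hX)).aestronglyMeasurable) ?_
    exact Eventually.of_forall fun ω => by
      rw [Real.norm_eq_abs]; exact Real.abs_cos_le_one _
  have hinner : ∀ l : ℝ, ∫ ω, F (ω, l) ∂P = 1 - ∫ ω, Real.cos (l * X ω) ∂P := by
    intro l
    rw [hF_def]
    simp only
    rw [integral_sub (integrable_const 1) (hcos_int l), integral_const]
    simp
  have hupper : ∫ ω, g ω ∂P ≤ c * u ^ (α + 1) / (α + 1) := by
    rw [hswap]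
    have hmono : ∫ l, (∫ ω, F (ω, l) ∂P) ∂ν ≤ ∫ l in Set.Ioc (0:ℝ) u, c * l ^ α := by
      refine setIntegral_mono_on ?_ ?_ measurableSet_Ioc ?_
      · exact hFint.integral_prod_right
      · have h1 : IntervalIntegrable (fun l : ℝ => l ^ α) volume 0 u :=
          intervalIntegral.intervalIntegrable_rpow' (by linarith)
        have h2 : IntervalIntegrable (fun l : ℝ => c * l ^ α) volume 0 u := h1.const_mul c
        exact (intervalIntegrable_iff_integrableOn_Ioc_of_le hu.le).mp h2
      · intro l hl
        rw [hinner l]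
        have := hRe l
        have habs : |l| = l := abs_of_pos hl.1
        rw [habs] at this
        linarith
    refine hmono.trans ?_
    have : ∫ l in Set.Ioc (0:ℝ) u, c * l ^ α = ∫ l in (0:ℝ)..u, c * l ^ α := by
      rw [intervalIntegral.integral_of_le hu.le]
    rw [this, intervalIntegral.integral_const_mul,
      integral_rpow (Or.inl (by linarith : (-1:ℝ) < α))]
    rw [Real.zero_rpow (by linarith : α + 1 ≠ 0)]
    ring_nf
    exact le_refl _
  -- pointwise lower bound on the bad set
  have hSmeas : MeasurableSet {ω | x ≤ |X ω|} := measurableSet_le measurable_const hX.abs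
  have hlow : ∀ ω ∈ {ω | x ≤ |X ω|}, u / 2 ≤ g ω := by
    intro ω hω
    have hb : x ≤ |X ω| := hω
    set b : ℝ := X ω with hb_def
    have hbne : b ≠ 0 := by
      intro h
      rw [h] at hb
      simp at hb
      linarith
    have hgval : g ω = u - Real.sin (u * b) / b := by
      rw [hg_def]
      simp only [hF_def]
      have : ∫ l, (1 - Real.cos (l * b)) ∂ν = ∫ l in (0:ℝ)..u, (1 - Real.cos (l * b)) := by
        rw [intervalIntegral.integral_of_le hu.le]
      rw [this]
      have hcos : ∫ l in (0:ℝ)..u, Real.cos (l * b) = Real.sin (u * b) / b :=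
        integral_cos_mul_eq u b hbne
      have hsplit : ∫ l in (0:ℝ)..u, (1 - Real.cos (l * b)) =
          (∫ l in (0:ℝ)..u, (1:ℝ)) - ∫ l in (0:ℝ)..u, Real.cos (l * b) := by
        apply intervalIntegral.integral_sub intervalIntegrable_const
        have : IntervalIntegrable (fun l => Real.cos (l * b)) volume 0 u := by
          apply Continuous.intervalIntegrable
          exact Real.continuous_cos.comp (continuous_id.mul continuous_const)
        exact this
      rw [hsplit, hcos, intervalIntegral.integral_const]
      simp
    rw [hgval]
    -- show sin (u*b)/b ≤ u/2 using |b| ≥ x = 2/u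
    have key : Real.sin (u * b) / b = Real.sin (u * |b|) / |b| := by
      rcases lt_or_gt_of_ne hbne with h | h
      · rw [abs_of_neg h]
        rw [show u * -b = -(u * b) by ring, Real.sin_neg]
        rw [neg_div_neg_eq]
      · rw [abs_of_pos h]
    rw [key]
    have hbpos : 0 < |b| := abs_pos.mpr hbne
    have h2 : u * |b| ≥ 2 := by
      calc (2:ℝ) = u * x := by rw [hu_def]; field_simp
        _ ≤ u * |b| := by exact mul_le_mul_of_nonneg_left hb hu.le
    have : Real.sin (u * |b|) / |b| ≤ 1 / |b| := by
      gcongr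
      exact Real.sin_le_one _
    have h1b : 1 / |b| ≤ u / 2 := by
      rw [div_le_div_iff₀ hbpos (by norm_num : (0:ℝ) < 2)]
      linarith
    linarith
  -- combine
  have hchain : u / 2 * (P {ω | x ≤ |X ω|}).toReal ≤ c * u ^ (α + 1) / (α + 1) := by
    calc u / 2 * (P {ω | x ≤ |X ω|}).toReal
        ≤ ∫ ω in {ω | x ≤ |X ω|}, g ω ∂P :=
          by have h := setIntegral_ge_of_const_le hSmeas (measure_ne_top P _) hlow hg_int.integrableOn
             rw [smul_eq_mul, mul_comm] at h; exact h
      _ ≤ ∫ ω, g ω ∂P := setIntegral_le_integral hg_int (Eventually.of_forall hg_nonneg)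
      _ ≤ c * u ^ (α + 1) / (α + 1) := hupper
  have hTR : (P {ω | x ≤ |X ω|}).toReal ≤ 2 ^ (α + 1) * c / ((α + 1) * x ^ α) := by
    have hα1 : (0:ℝ) < α + 1 := by linarith
    have hua : u ^ (α + 1) = u ^ α * u := Real.rpow_add_one (ne_of_gt hu) α
    have huα : u ^ α = 2 ^ α / x ^ α := by
      rw [hu_def, Real.div_rpow (by norm_num) (le_of_lt hx)]
    have h2a : (2:ℝ) ^ (α + 1) = 2 ^ α * 2 := Real.rpow_add_one (by norm_num) α
    have hxa : (0:ℝ) < x ^ α := Real.rpow_pos_of_pos hx α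
    have h2α : (0:ℝ) < (2:ℝ) ^ α := Real.rpow_pos_of_pos (by norm_num) α
    have hthis := hchain
    rw [hua, huα] at hthis
    have hstep : (P {ω | x ≤ |X ω|}).toReal ≤ 2 * (c * (2 ^ α / x ^ α * u) / (α + 1)) / u := by
      rw [le_div_iff₀ hu]
      linarith
    refine hstep.trans (le_of_eq ?_)
    rw [h2a]
    field_simp
  calc P {ω | x ≤ |X ω|} = ENNReal.ofReal (P {ω | x ≤ |X ω|}).toReal :=
        (ENNReal.ofReal_toReal (measure_ne_top P _)).symm
    _ ≤ ENNReal.ofReal (2 ^ (α + 1) * c / ((α + 1) * x ^ α)) := ENNReal.ofReal_le_ofReal hTR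

/-- auxiliary: `1 - Re (exp w) ≤ 2 |w|` when `Re w ≤ 0`. -/
lemma one_sub_exp_re_le (w : ℂ) (hw : w.re ≤ 0) :
    1 - (Complex.exp w).re ≤ 2 * ‖w‖ := by
  rcases le_or_gt ‖w‖ 1 with h | h
  · have h1 : 1 - (Complex.exp w).re = (1 - Complex.exp w).re := by simp
    have h2 : (1 - Complex.exp w).re ≤ ‖1 - Complex.exp w‖ := Complex.re_le_norm _
    have h3 : ‖1 - Complex.exp w‖ = ‖Complex.exp w - 1‖ := norm_sub_rev _ _
    have h4 := Complex.norm_exp_sub_one_le (x := w) h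
    linarith
  · have h1 : ‖Complex.exp w‖ = Real.exp w.re := Complex.norm_exp w
    have h2 : Real.exp w.re ≤ 1 := by
      calc Real.exp w.re ≤ Real.exp 0 := Real.exp_le_exp.mpr hw
        _ = 1 := Real.exp_zero
    have h3 : -(Complex.exp w).re ≤ ‖Complex.exp w‖ := by
      have := Complex.abs_re_le_norm (Complex.exp w)
      rw [abs_le] at this
      linarith [this.1]
    linarith

/-- The tail constant. -/
noncomputable def tailC (α C : ℝ) : ℝ :=
  2 ^ (α + 1) * (2 * C ^ α * (1 + |Real.tan (π * α / 2)|)) / (α + 1)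

lemma tailC_nonneg (α C : ℝ) (hα : 0 < α) (hC : 0 < C) : 0 ≤ tailC α C := by
  unfold tailC
  have := Real.rpow_pos_of_pos hC α
  have : (0:ℝ) < 2 ^ (α+1) := Real.rpow_pos_of_pos (by norm_num) _
  positivity

lemma stable_cos_bound (P : Measure Ω) [IsProbabilityMeasure P] {α C β : ℝ} {L : ℝ → Ω → ℝ}
    (hL : IsStableLevy P α C β L) (hα : 0 < α) (hC : 0 < C) (hβ : |β| ≤ 1)
    (t : ℝ) (ht : 0 ≤ t) (l : ℝ) :
    1 - (2 * C ^ α * (1 + |Real.tan (π * α / 2)|) * t) * |l| ^ α ≤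
      ∫ ω, Real.cos (l * L t ω) ∂P := by
  have hint : Integrable (fun ω => Complex.exp (Complex.I * (l : ℂ) * (L t ω : ℂ))) P := by
    refine (integrable_const (1 : ℝ)).mono' ?_ ?_
    · have hm : Measurable fun ω => Complex.exp (Complex.I * (l : ℂ) * (L t ω : ℂ)) :=
        Complex.measurable_exp.comp
          (measurable_const.mul (Complex.measurable_ofReal.comp (hL.measurable t)))
      exact hm.aestronglyMeasurable
    · refine Eventually.of_forall fun ω => ?_
      rw [Complex.norm_exp]
      have : (Complex.I * (l : ℂ) * ((L t ω : ℝ) : ℂ)).re = 0 := by simp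
      rw [this, Real.exp_zero]
  have hre : ∫ ω, Real.cos (l * L t ω) ∂P =
      (∫ ω, Complex.exp (Complex.I * (l : ℂ) * (L t ω : ℂ)) ∂P).re := by
    have hcomm := Complex.reCLM.integral_comp_comm hint
    simp only [Complex.reCLM_apply] at hcomm
    rw [← hcomm]
    congr 1
    funext ω
    have hrw : Complex.I * (l : ℂ) * ((L t ω : ℝ) : ℂ) = ((l * L t ω : ℝ) : ℂ) * Complex.I := by
      push_cast; ring
    rw [hrw, Complex.exp_ofReal_mul_I_re]
  rw [hre, hL.charFun t ht l]
  set r : ℝ := -(t * C ^ α * |l| ^ α) with hr_def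
  set b : ℝ := β * Real.sign l * Real.tan (π * α / 2) with hb_def
  set w : ℂ := (r : ℂ) * (1 - Complex.I * (b : ℂ)) with hw_def
  have hCα : (0:ℝ) < C ^ α := Real.rpow_pos_of_pos hC α
  have hlα : (0:ℝ) ≤ |l| ^ α := Real.rpow_nonneg (abs_nonneg l) α
  have hr_nonpos : r ≤ 0 := by
    rw [hr_def]
    simp only [neg_nonpos]
    positivity
  have hwre : w.re = r := by
    rw [hw_def]
    simp [Complex.mul_re, Complex.sub_re, Complex.sub_im, Complex.mul_im]
  have habsw : ‖w‖ ≤ |r| * (1 + |b|) := by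
    rw [hw_def, norm_mul, Complex.norm_real, Real.norm_eq_abs]
    gcongr
    calc ‖1 - Complex.I * (b : ℂ)‖ ≤
        ‖(1:ℂ)‖ + ‖Complex.I * (b : ℂ)‖ := by
          exact norm_sub_le _ _
      _ = 1 + |b| := by simp
  have hb_le : |b| ≤ |Real.tan (π * α / 2)| := by
    rw [hb_def, abs_mul, abs_mul]
    have hsign : |Real.sign l| ≤ 1 := by
      rcases Real.sign_apply_eq l with h | h | h <;> rw [h] <;> norm_num
    calc |β| * |Real.sign l| * |Real.tan (π * α / 2)| ≤
        1 * 1 * |Real.tan (π * α / 2)| := by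
          apply mul_le_mul_of_nonneg_right _ (abs_nonneg _)
          exact mul_le_mul hβ hsign (abs_nonneg _) (by norm_num)
      _ = |Real.tan (π * α / 2)| := by ring
  have hkey := one_sub_exp_re_le w (by rw [hwre]; exact hr_nonpos)
  have habsr : |r| = t * C ^ α * |l| ^ α := by
    rw [hr_def, abs_neg, abs_of_nonneg (by positivity)]
  have hfinal : 2 * ‖w‖ ≤ 2 * C ^ α * (1 + |Real.tan (π * α / 2)|) * t * |l| ^ α := by
    have h1 : ‖w‖ ≤ (t * C ^ α * |l| ^ α) * (1 + |Real.tan (π * α / 2)|) := by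
      refine habsw.trans ?_
      rw [habsr]
      apply mul_le_mul_of_nonneg_left _ (by positivity)
      linarith
    nlinarith [norm_nonneg w]
  linarith

/-- Truncated `p`-th moment bound from a polynomial tail bound. -/
lemma trunc_moment_s18 (P : Measure Ω) [IsProbabilityMeasure P] (X : Ω → ℝ) (hX : Measurable X)
    (α p c a : ℝ) (hα : 0 < α) (hp : α < p) (hc : 0 ≤ c) (ha : 0 < a)
    (htail : ∀ x : ℝ, 0 < x → P {ω | x ≤ |X ω|} ≤ ENNReal.ofReal (c / x ^ α)) :
    ∫⁻ ω, ENNReal.ofReal (min (|X ω| ^ p) a) ∂P ≤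
      ENNReal.ofReal (c * (a ^ (1 - α / p) / (1 - α / p))) := by
  have hp0 : 0 < p := lt_trans hα hp
  set γ : ℝ := α / p with hγ_def
  have hγ0 : 0 < γ := by positivity
  have hγ1 : γ < 1 := by rw [hγ_def, div_lt_one hp0]; exact hp
  set f : Ω → ℝ := fun ω => min (|X ω| ^ p) a with hf_def
  have hfmeas : Measurable f := by
    apply Measurable.min _ measurable_const
    exact Measurable.pow_const hX.abs p
  have hlayer := lintegral_eq_lintegral_meas_lt P
    (Eventually.of_forall fun ω => le_min (Real.rpow_nonneg (abs_nonneg _) p) ha.le)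
    hfmeas.aemeasurable
  rw [hlayer]
  have hbound : ∀ s ∈ Set.Ioi (0:ℝ), P {ω | s < f ω} ≤
      (Set.Ioc (0:ℝ) a).indicator (fun s => ENNReal.ofReal (c * s ^ (-γ))) s := by
    intro s hs
    rcases le_or_gt a s with hsa | hsa
    · have hempty : {ω | s < f ω} = ∅ := by
        ext ω
        simp only [Set.mem_setOf_eq, Set.mem_empty_iff_false, iff_false, not_lt, hf_def]
        exact le_trans (min_le_right _ _) hsa
      rw [hempty, measure_empty]
      exact zero_le
    · have hs' : (0:ℝ) < s := hs
      have hmem : s ∈ Set.Ioc (0:ℝ) a := ⟨hs', hsa.le⟩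
      rw [Set.indicator_of_mem hmem]
      have hsub : {ω | s < f ω} ⊆ {ω | s ^ (1/p) ≤ |X ω|} := by
        intro ω hω
        simp only [Set.mem_setOf_eq, hf_def] at hω ⊢
        have h1 : s < |X ω| ^ p := lt_of_lt_of_le hω (min_le_left _ _)
        have h2 : s ^ (1/p) < (|X ω| ^ p) ^ (1/p) :=
          Real.rpow_lt_rpow hs'.le h1 (by positivity)
        rw [← Real.rpow_mul (abs_nonneg _), mul_one_div, div_self (ne_of_gt hp0),
          Real.rpow_one] at h2
        exact h2.le
      refine (measure_mono hsub).trans ?_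
      have hsp : (0:ℝ) < s ^ (1/p) := Real.rpow_pos_of_pos hs' _
      refine (htail _ hsp).trans (le_of_eq ?_)
      congr 1
      rw [← Real.rpow_mul hs'.le]
      have hexp : 1 / p * α = γ := by rw [hγ_def]; ring
      rw [hexp, Real.rpow_neg hs'.le, div_eq_mul_inv]
  have hmono : ∫⁻ s in Set.Ioi (0:ℝ), P {ω | s < f ω} ≤
      ∫⁻ s in Set.Ioi (0:ℝ),
        (Set.Ioc (0:ℝ) a).indicator (fun s => ENNReal.ofReal (c * s ^ (-γ))) s := by
    apply lintegral_mono_ae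
    exact (ae_restrict_iff' measurableSet_Ioi).mpr (Eventually.of_forall hbound)
  refine hmono.trans ?_
  rw [lintegral_indicator measurableSet_Ioc _, Measure.restrict_restrict measurableSet_Ioc]
  have hinter : Set.Ioc (0:ℝ) a ∩ Set.Ioi (0:ℝ) = Set.Ioc (0:ℝ) a := by
    apply Set.inter_eq_self_of_subset_left
    exact Set.Ioc_subset_Ioi_self
  rw [hinter]
  have hint : IntegrableOn (fun s : ℝ => c * s ^ (-γ)) (Set.Ioc (0:ℝ) a) := by
    have h1 : IntervalIntegrable (fun s : ℝ => s ^ (-γ)) volume 0 a :=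
      intervalIntegral.intervalIntegrable_rpow' (by linarith)
    exact (intervalIntegrable_iff_integrableOn_Ioc_of_le ha.le).mp (h1.const_mul c)
  have hnn : 0 ≤ᵐ[volume.restrict (Set.Ioc (0:ℝ) a)] fun s : ℝ => c * s ^ (-γ) := by
    refine (ae_restrict_iff' measurableSet_Ioc).mpr (Eventually.of_forall fun s hs => ?_)
    have : (0:ℝ) < s := hs.1
    positivity
  rw [← ofReal_integral_eq_lintegral_ofReal hint hnn]
  apply ENNReal.ofReal_le_ofReal
  rw [← intervalIntegral.integral_of_le ha.le, intervalIntegral.integral_const_mul,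
    integral_rpow (Or.inl (by linarith : (-1:ℝ) < -γ)),
    Real.zero_rpow (by linarith : -γ + 1 ≠ 0)]
  have hexp : -γ + 1 = 1 - γ := by ring
  rw [hexp]
  rw [sub_zero]


lemma stable_tail (P : Measure Ω) [IsProbabilityMeasure P] {α C β : ℝ} {L : ℝ → Ω → ℝ}
    (hL : IsStableLevy P α C β L) (hα : 0 < α) (hC : 0 < C) (hβ : |β| ≤ 1)
    (t : ℝ) (ht : 0 ≤ t) (x : ℝ) (hx : 0 < x) :
    P {ω | x ≤ |L t ω|} ≤ ENNReal.ofReal (tailC α C * t / x ^ α) := by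
  have hCα : (0:ℝ) < C ^ α := Real.rpow_pos_of_pos hC α
  have hc0 : (0:ℝ) ≤ 2 * C ^ α * (1 + |Real.tan (π * α / 2)|) * t := by positivity
  have h := tail_of_cos P (L t) (hL.measurable t) α
    (2 * C ^ α * (1 + |Real.tan (π * α / 2)|) * t) hα hc0
    (fun l => stable_cos_bound P hL hα hC hβ t ht l) x hx
  refine h.trans (le_of_eq ?_)
  congr 1
  unfold tailC
  have hxα : x ^ α ≠ 0 := ne_of_gt (Real.rpow_pos_of_pos hx α)
  have hα1 : α + 1 ≠ 0 := by linarith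
  field_simp

/-- Tail bound for increments. -/
lemma incr_tail (P : Measure Ω) [IsProbabilityMeasure P] {α C β : ℝ} {L : ℝ → Ω → ℝ}
    (hL : IsStableLevy P α C β L) (hα : 0 < α) (hC : 0 < C) (hβ : |β| ≤ 1)
    (s t : ℝ) (hs : 0 ≤ s) (ht : 0 ≤ t) (x : ℝ) (hx : 0 < x) :
    P {ω | x ≤ |L (t + s) ω - L s ω|} ≤ ENNReal.ofReal (tailC α C * t / x ^ α) := by
  have hDmeas : Measurable fun ω => L (t + s) ω - L s ω :=
    (hL.measurable _).sub (hL.measurable _)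
  have hSet : MeasurableSet {y : ℝ | x ≤ |y|} :=
    measurableSet_le measurable_const measurable_abs
  have h1 : P {ω | x ≤ |L (t + s) ω - L s ω|} =
      (Measure.map (fun ω => L (t + s) ω - L s ω) P) {y | x ≤ |y|} := by
    rw [Measure.map_apply hDmeas hSet]
    rfl
  rw [h1, hL.statIncr s t hs ht, Measure.map_apply (hL.measurable t) hSet]
  exact stable_tail P hL hα hC hβ t ht x hx

/-- Uniform-in-`n` tightness of `pVar p n L N`. -/
lemma pVar_tight (P : Measure Ω) [IsProbabilityMeasure P] {α C β p : ℝ} {L : ℝ → Ω → ℝ}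
    (hL : IsStableLevy P α C β L) (hα : 0 < α) (hC : 0 < C) (hβ : |β| ≤ 1) (hp : α < p)
    (N : ℝ) (hN : 0 < N) (η : ℝ≥0∞) (hη : 0 < η) :
    ∃ M : ℝ, 1 ≤ M ∧ ∀ n : ℕ, P {ω | M < pVar p n L N ω} ≤ η := by
  have hp0 : 0 < p := lt_trans hα hp
  set γ : ℝ := α / p with hγ_def
  have hγ0 : 0 < γ := by positivity
  have hγ1 : γ < 1 := by rw [hγ_def, div_lt_one hp0]; exact hp
  have htc := tailC_nonneg α C hα hC
  set E : ℝ := tailC α C * N * (1 + 1 / (1 - γ)) with hE_def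
  have hE0 : 0 ≤ E := by
    have h1γ : 0 < 1 - γ := by linarith
    have : (0:ℝ) ≤ 1 + 1/(1-γ) := by positivity
    positivity
  -- the core bound
  have hcore : ∀ M : ℝ, 1 ≤ M → ∀ n : ℕ,
      P {ω | M < pVar p n L N ω} ≤ ENNReal.ofReal (E * M ^ (-γ)) := by
    intro M hM n
    have hM0 : (0:ℝ) < M := lt_of_lt_of_le one_pos hM
    rcases Nat.eq_zero_or_pos n with hn | hn
    · subst hn
      have hzero : ∀ ω : Ω, pVar p 0 L N ω = 0 := by
        intro ω; simp [pVar]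
      have : {ω : Ω | M < pVar p 0 L N ω} = ∅ := by
        ext ω; simp [hzero ω]; linarith
      rw [this, measure_empty]
      exact zero_le
    · have hn0 : (0:ℝ) < (n:ℝ) := by exact_mod_cast hn
      set m : ℕ := ⌊(n:ℝ) * N⌋₊ with hm_def
      have hmN : (m : ℝ) ≤ (n:ℝ) * N := Nat.floor_le (by positivity)
      set D : ℕ → Ω → ℝ := fun i ω => L ((i:ℝ)/(n:ℝ)) ω - L (((i:ℝ)-1)/(n:ℝ)) ω with hD_def
      have hDmeas : ∀ i, Measurable (D i) := fun i =>
        (hL.measurable _).sub (hL.measurable _)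
      have hpVar : ∀ ω, pVar p n L N ω = ∑ i ∈ Finset.Icc 1 m, |D i ω| ^ p := by
        intro ω; rfl
      -- tail bound for each increment
      have hDtail : ∀ i : ℕ, i ∈ Finset.Icc 1 m → ∀ x : ℝ, 0 < x →
          P {ω | x ≤ |D i ω|} ≤ ENNReal.ofReal (tailC α C * (1/(n:ℝ)) / x ^ α) := by
        intro i hi x hx
        have hi1 : 1 ≤ i := (Finset.mem_Icc.mp hi).1
        have hs : (0:ℝ) ≤ ((i:ℝ)-1)/(n:ℝ) := by
          apply div_nonneg _ hn0.le
          have : (1:ℝ) ≤ (i:ℝ) := by exact_mod_cast hi1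
          linarith
        have ht : (0:ℝ) ≤ 1/(n:ℝ) := by positivity
        have hplus : 1/(n:ℝ) + ((i:ℝ)-1)/(n:ℝ) = (i:ℝ)/(n:ℝ) := by
          field_simp
          ring
        have := incr_tail P hL hα hC hβ (((i:ℝ)-1)/(n:ℝ)) (1/(n:ℝ)) hs ht x hx
        rw [hplus] at this
        exact this
      -- decomposition
      set bad1 : Set Ω := ⋃ i ∈ Finset.Icc 1 m, {ω | M ^ (1/p) ≤ |D i ω|} with hbad1_def
      set f : Ω → ℝ≥0∞ := fun ω => ∑ i ∈ Finset.Icc 1 m,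
        ENNReal.ofReal (min (|D i ω| ^ p) M) with hf_def
      set bad2 : Set Ω := {ω | ENNReal.ofReal M ≤ f ω} with hbad2_def
      have hincl : {ω | M < pVar p n L N ω} ⊆ bad1 ∪ bad2 := by
        intro ω hω
        simp only [Set.mem_setOf_eq] at hω
        by_cases hcase : ∃ i ∈ Finset.Icc 1 m, M ^ (1/p) ≤ |D i ω|
        · left
          obtain ⟨i, hi, hix⟩ := hcase
          exact Set.mem_biUnion hi hix
        · right
          push_neg at hcase
          have hsmall : ∀ i ∈ Finset.Icc 1 m, min (|D i ω| ^ p) M = |D i ω| ^ p := by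
            intro i hi
            apply min_eq_left
            have h1 : |D i ω| ≤ M ^ (1/p) := (hcase i hi).le
            have h2 : |D i ω| ^ p ≤ (M ^ (1/p)) ^ p :=
              Real.rpow_le_rpow (abs_nonneg _) h1 hp0.le
            rwa [← Real.rpow_mul hM0.le, one_div_mul_cancel (ne_of_gt hp0),
              Real.rpow_one] at h2
          rw [hbad2_def]
          simp only [Set.mem_setOf_eq, hf_def]
          have : ∑ i ∈ Finset.Icc 1 m, ENNReal.ofReal (min (|D i ω| ^ p) M) =
              ENNReal.ofReal (pVar p n L N ω) := by
            rw [hpVar ω, ENNReal.ofReal_sum_of_nonneg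
              (fun i _ => Real.rpow_nonneg (abs_nonneg _) p)]
            exact Finset.sum_congr rfl fun i hi => by rw [hsmall i hi]
          rw [this]
          exact ENNReal.ofReal_le_ofReal hω.le
      -- bound on bad1
      have hMp : (0:ℝ) < M ^ (1/p) := Real.rpow_pos_of_pos hM0 _
      have hMpα : (M ^ (1/p)) ^ α = M ^ γ := by
        rw [← Real.rpow_mul hM0.le]
        congr 1
        rw [hγ_def]; ring
      have hMγ : (0:ℝ) < M ^ γ := Real.rpow_pos_of_pos hM0 _
      have hbad1 : P bad1 ≤ ENNReal.ofReal (tailC α C * N / M ^ γ) := by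
        rw [hbad1_def]
        refine (measure_biUnion_finset_le _ _).trans ?_
        have hone : ∀ i ∈ Finset.Icc 1 m, P {ω | M ^ (1/p) ≤ |D i ω|} ≤
            ENNReal.ofReal (tailC α C * (1/(n:ℝ)) / M ^ γ) := by
          intro i hi
          have := hDtail i hi (M ^ (1/p)) hMp
          rwa [hMpα] at this
        refine (Finset.sum_le_sum hone).trans ?_
        rw [Finset.sum_const, Nat.card_Icc]
        simp only [Nat.add_sub_cancel, nsmul_eq_mul]
        rw [← ENNReal.ofReal_natCast m, ← ENNReal.ofReal_mul (Nat.cast_nonneg m)]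
        apply ENNReal.ofReal_le_ofReal
        have hmn : (m:ℝ)/(n:ℝ) ≤ N := by rw [div_le_iff₀ hn0]; linarith
        have key : (m:ℝ) * (tailC α C * (1/(n:ℝ))) ≤ tailC α C * N := by
          calc (m:ℝ) * (tailC α C * (1/(n:ℝ))) = tailC α C * ((m:ℝ)/(n:ℝ)) := by ring
            _ ≤ tailC α C * N := mul_le_mul_of_nonneg_left hmn htc
        calc (m:ℝ) * (tailC α C * (1/(n:ℝ)) / M ^ γ)
            = ((m:ℝ) * (tailC α C * (1/(n:ℝ)))) / M ^ γ := by ring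
          _ ≤ (tailC α C * N) / M ^ γ := by gcongr
          _ = tailC α C * N / M ^ γ := rfl
      -- bound on bad2 via Markov
      have hfmeas : Measurable f := by
        rw [hf_def]
        apply Finset.measurable_sum
        intro i _
        apply Measurable.ennreal_ofReal
        exact ((hDmeas i).abs.pow_const p).min measurable_const
      have hmarkov : ENNReal.ofReal M * P bad2 ≤ ∫⁻ ω, f ω ∂P := by
        rw [hbad2_def]
        exact mul_meas_ge_le_lintegral₀ hfmeas.aemeasurable (ENNReal.ofReal M)
      have hlint : ∫⁻ ω, f ω ∂P ≤
          ENNReal.ofReal (tailC α C * N * (M ^ (1-γ) / (1-γ))) := by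
        rw [hf_def]
        rw [lintegral_finset_sum _ (fun i _ =>
          (Measurable.ennreal_ofReal (((hDmeas i).abs.pow_const p).min measurable_const)))]
        have hone : ∀ i ∈ Finset.Icc 1 m, ∫⁻ ω, ENNReal.ofReal (min (|D i ω| ^ p) M) ∂P ≤
            ENNReal.ofReal ((tailC α C * (1/(n:ℝ))) * (M ^ (1-γ) / (1-γ))) := by
          intro i hi
          have := trunc_moment_s18 P (D i) (hDmeas i) α p (tailC α C * (1/(n:ℝ))) M hα hp
            (by positivity) hM0 (fun x hx => hDtail i hi x hx)
          rw [← hγ_def] at this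
          exact this
        refine (Finset.sum_le_sum hone).trans ?_
        rw [Finset.sum_const, Nat.card_Icc]
        simp only [Nat.add_sub_cancel, nsmul_eq_mul]
        rw [← ENNReal.ofReal_natCast m, ← ENNReal.ofReal_mul (Nat.cast_nonneg m)]
        apply ENNReal.ofReal_le_ofReal
        have h1γ : (0:ℝ) < 1 - γ := by linarith
        have hMpow : (0:ℝ) ≤ M ^ (1-γ) := (Real.rpow_pos_of_pos hM0 _).le
        have hmn : (m:ℝ)/(n:ℝ) ≤ N := by rw [div_le_iff₀ hn0]; linarith
        have key : (m:ℝ) * (tailC α C * (1/(n:ℝ))) ≤ tailC α C * N := by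
          calc (m:ℝ) * (tailC α C * (1/(n:ℝ))) = tailC α C * ((m:ℝ)/(n:ℝ)) := by ring
            _ ≤ tailC α C * N := mul_le_mul_of_nonneg_left hmn htc
        calc (m:ℝ) * (tailC α C * (1/(n:ℝ)) * (M ^ (1-γ)/(1-γ)))
            = ((m:ℝ) * (tailC α C * (1/(n:ℝ)))) * (M ^ (1-γ)/(1-γ)) := by ring
          _ ≤ tailC α C * N * (M ^ (1-γ)/(1-γ)) := by
              apply mul_le_mul_of_nonneg_right key (by positivity)
      have hbad2 : P bad2 ≤ ENNReal.ofReal (tailC α C * N * (M ^ (-γ) / (1-γ))) := by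
        have hMne : ENNReal.ofReal M ≠ 0 := by
          simp only [ne_eq, ENNReal.ofReal_eq_zero, not_le]; exact hM0
        have hMnetop : ENNReal.ofReal M ≠ ⊤ := ENNReal.ofReal_ne_top
        have hdiv : P bad2 ≤ ENNReal.ofReal (tailC α C * N * (M ^ (1-γ) / (1-γ))) /
            ENNReal.ofReal M := by
          rw [ENNReal.le_div_iff_mul_le (Or.inl hMne) (Or.inl hMnetop), mul_comm]
          exact hmarkov.trans hlint
        refine hdiv.trans ?_
        rw [← ENNReal.ofReal_div_of_pos hM0]
        apply ENNReal.ofReal_le_ofReal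
        have h1γ : (0:ℝ) < 1 - γ := by linarith
        have heq : M ^ (1-γ) / M = M ^ (-γ) := by
          rw [Real.rpow_sub hM0, Real.rpow_one, Real.rpow_neg hM0.le]
          field_simp
        have hre : tailC α C * N * (M ^ (1-γ)/(1-γ)) / M =
            tailC α C * N * (M ^ (-γ)/(1-γ)) := by
          rw [← heq]; ring
        rw [hre]
      -- combine
      calc P {ω | M < pVar p n L N ω} ≤ P (bad1 ∪ bad2) := measure_mono hincl
        _ ≤ P bad1 + P bad2 := measure_union_le _ _
        _ ≤ ENNReal.ofReal (tailC α C * N / M ^ γ) +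
            ENNReal.ofReal (tailC α C * N * (M ^ (-γ) / (1-γ))) := add_le_add hbad1 hbad2
        _ ≤ ENNReal.ofReal (E * M ^ (-γ)) := by
            have h1γ : (0:ℝ) < 1 - γ := by linarith
            have hMnegγ2 : (0:ℝ) ≤ M ^ (-γ) := (Real.rpow_pos_of_pos hM0 _).le
            rw [← ENNReal.ofReal_add (by positivity) (by positivity)]
            apply ENNReal.ofReal_le_ofReal
            have hMnegγ : M ^ (-γ) = 1 / M ^ γ := by
              rw [Real.rpow_neg hM0.le, one_div]
            rw [hMnegγ, hE_def]
            apply le_of_eq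
            field_simp
    -- choose M
  rcases eq_top_or_lt_top η with htop | hlt
  · exact ⟨1, le_refl 1, fun n => htop ▸ le_top⟩
  · have hηr : 0 < η.toReal := ENNReal.toReal_pos (ne_of_gt hη) (ne_of_lt hlt)
    have htend : Tendsto (fun M : ℝ => E * M ^ (-γ)) atTop (nhds 0) := by
      have := (tendsto_rpow_neg_atTop hγ0).const_mul E
      simpa using this
    have hev : ∀ᶠ M : ℝ in atTop, E * M ^ (-γ) < η.toReal :=
      htend.eventually (eventually_lt_nhds hηr)
    obtain ⟨M, hM⟩ := (hev.and (eventually_ge_atTop 1)).exists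
    refine ⟨M, hM.2, fun n => (hcore M hM.2 n).trans ?_⟩
    calc ENNReal.ofReal (E * M ^ (-γ)) ≤ ENNReal.ofReal η.toReal :=
          ENNReal.ofReal_le_ofReal hM.1.le
      _ = η := ENNReal.ofReal_toReal (ne_of_lt hlt)

lemma pVar_nonneg (p : ℝ) (n : ℕ) (X : ℝ → Ω → ℝ) (t : ℝ) (ω : Ω) : 0 ≤ pVar p n X t ω :=
  Finset.sum_nonneg fun i _ => Real.rpow_nonneg (abs_nonneg _) p


theorem pvar_perturbation_gt_alpha (P : Measure Ω) [IsProbabilityMeasure P]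
    (α C β p : ℝ) (hα : α ∈ Set.Ioo (0 : ℝ) 2) (hα1 : α ≠ 1) (hC : 0 < C)
    (hβ : β ∈ Set.Icc (-1 : ℝ) 1) (L : ℝ → Ω → ℝ)
    (hL : IsStableLevy P α C β L) (hp : α < p)
    (Y : ℝ → Ω → ℝ)
    (hY : ∀ t : ℝ, 0 < t → ∀ ε : ℝ, 0 < ε →
      Tendsto (fun n : ℕ => P {ω | ε < |pVar p n Y t ω|}) atTop (nhds 0)) :
    ∀ N : ℝ, 0 < N → ∀ ε : ℝ, 0 < ε →
      Tendsto (fun n : ℕ => P {ω | ε <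
          ⨆ t ∈ Set.Icc (0 : ℝ) N,
            |pVar p n (fun s ω' => L s ω' + Y s ω') t ω - pVar p n L t ω|})
        atTop (nhds 0) := by
  intro N hN ε hε
  have hα0 : 0 < α := hα.1
  have hp0 : 0 < p := lt_trans hα0 hp
  have hβ' : |β| ≤ 1 := abs_le.mpr ⟨hβ.1, hβ.2⟩
  rw [ENNReal.tendsto_nhds_zero]
  intro η hη
  have hη2 : 0 < η / 2 := ENNReal.half_pos (ne_of_gt hη)
  obtain ⟨M, hM1, hMb⟩ := pVar_tight P hL hα0 hC hβ' hp N hN (η/2) hη2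
  have hM0 : (0:ℝ) < M := lt_of_lt_of_le one_pos hM1
  set ε' : ℝ := ε / (2 * M) with hε'_def
  have hε'0 : 0 < ε' := by positivity
  obtain ⟨K, hK0, hKineq⟩ := abs_rpow_perturb p hp0 ε' hε'0
  set εY : ℝ := ε / (2 * K) with hεY_def
  have hεY0 : 0 < εY := by positivity
  have hYN := (ENNReal.tendsto_nhds_zero.mp (hY N hN εY hεY0)) (η/2) hη2
  filter_upwards [hYN] with n hn
  set A : Set Ω := {ω | M < pVar p n L N ω} with hA_def
  set B : Set Ω := {ω | εY < |pVar p n Y N ω|} with hB_def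
  have hincl : {ω | ε < ⨆ t ∈ Set.Icc (0 : ℝ) N,
      |pVar p n (fun s ω' => L s ω' + Y s ω') t ω - pVar p n L t ω|} ⊆ A ∪ B := by
    intro ω hω
    simp only [Set.mem_setOf_eq] at hω
    by_contra hcon
    rw [Set.mem_union] at hcon
    push_neg at hcon
    obtain ⟨hnA, hnB⟩ := hcon
    have hLM : pVar p n L N ω ≤ M := by
      have := hnA; rw [hA_def] at this
      simpa [Set.mem_setOf_eq, not_lt] using this
    have hYε : pVar p n Y N ω ≤ εY := by
      have := hnB; rw [hB_def] at this
      simp only [Set.mem_setOf_eq, not_lt] at this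
      calc pVar p n Y N ω ≤ |pVar p n Y N ω| := le_abs_self _
        _ ≤ εY := this
    refine absurd hω (not_lt.mpr ?_)
    refine Real.iSup_le (fun t => Real.iSup_le (fun ht => ?_) hε.le) hε.le
    -- key pointwise bound
    have hmt : ⌊(n:ℝ) * t⌋₊ ≤ ⌊(n:ℝ) * N⌋₊ := by
      apply Nat.floor_mono
      apply mul_le_mul_of_nonneg_left ht.2 (Nat.cast_nonneg n)
    set a : ℕ → ℝ := fun i => L ((i:ℝ)/(n:ℝ)) ω - L (((i:ℝ)-1)/(n:ℝ)) ω with ha_def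
    set b : ℕ → ℝ := fun i => Y ((i:ℝ)/(n:ℝ)) ω - Y (((i:ℝ)-1)/(n:ℝ)) ω with hb_def
    have hsum : pVar p n (fun s ω' => L s ω' + Y s ω') t ω - pVar p n L t ω =
        ∑ i ∈ Finset.Icc 1 ⌊(n:ℝ) * t⌋₊, (|a i + b i| ^ p - |a i| ^ p) := by
      rw [Finset.sum_sub_distrib]
      congr 1
      · apply Finset.sum_congr rfl
        intro i _
        congr 2
        rw [ha_def, hb_def]
        simp only
        ring
    calc |pVar p n (fun s ω' => L s ω' + Y s ω') t ω - pVar p n L t ω|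
        = |∑ i ∈ Finset.Icc 1 ⌊(n:ℝ) * t⌋₊, (|a i + b i| ^ p - |a i| ^ p)| := by rw [hsum]
      _ ≤ ∑ i ∈ Finset.Icc 1 ⌊(n:ℝ) * t⌋₊, |(|a i + b i| ^ p - |a i| ^ p)| :=
          Finset.abs_sum_le_sum_abs _ _
      _ ≤ ∑ i ∈ Finset.Icc 1 ⌊(n:ℝ) * t⌋₊, (ε' * |a i| ^ p + K * |b i| ^ p) :=
          Finset.sum_le_sum fun i _ => hKineq (a i) (b i)
      _ ≤ ∑ i ∈ Finset.Icc 1 ⌊(n:ℝ) * N⌋₊, (ε' * |a i| ^ p + K * |b i| ^ p) := by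
          apply Finset.sum_le_sum_of_subset_of_nonneg
            (Finset.Icc_subset_Icc_right hmt)
          intro i _ _
          have h1 : (0:ℝ) ≤ |a i| ^ p := Real.rpow_nonneg (abs_nonneg _) p
          have h2 : (0:ℝ) ≤ |b i| ^ p := Real.rpow_nonneg (abs_nonneg _) p
          positivity
      _ = ε' * pVar p n L N ω + K * pVar p n Y N ω := by
          rw [Finset.sum_add_distrib, ← Finset.mul_sum, ← Finset.mul_sum]
          rfl
      _ ≤ ε' * M + K * εY := by
          apply add_le_add
          · exact mul_le_mul_of_nonneg_left hLM hε'0.le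
          · exact mul_le_mul_of_nonneg_left hYε hK0.le
      _ = ε := by
          rw [hε'_def, hεY_def]
          field_simp
          ring
  calc P {ω | ε < ⨆ t ∈ Set.Icc (0 : ℝ) N,
        |pVar p n (fun s ω' => L s ω' + Y s ω') t ω - pVar p n L t ω|}
      ≤ P (A ∪ B) := measure_mono hincl
    _ ≤ P A + P B := measure_union_le _ _
    _ ≤ η / 2 + η / 2 := add_le_add (hMb n) hn
    _ = η := ENNReal.add_halves η
end
end
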